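/- Let V₂ be a Hilbert space with norm ‖ζ‖²_{V₂} = ‖ζ‖²_{𝕄} + M‖div ζ‖²_{L²} where ‖·‖_{𝕄} is the norm induced by a coercive bounded symmetric bilinear form a₂ on V₂ (a₂(ζ,ζ) = ‖ζ‖²_{𝕄}), M ≥ 1, and θ ∈ (0, 1/M]. Define b₂(ξ,ψ) = ∫_Ω ψ div ξ, c₂(φ,ψ) = ∫_Ω φψ, and the product norm ‖(ξ,ψ)‖² = ‖ξ‖²_{V₂} + (1/M)‖ψ‖²_{L²} + θ‖ψ‖²_{L²}. Then for every ζ ∈ V₂, choosing ξ = ζ and φ = M div ζ yields a₂(ζ,ζ) + b₂(ζ, M div ζ) = ‖ζ‖²_{V₂} and ‖(ζ, M div ζ)‖² ≤ C‖ζ‖²_{V₂} for an absolute constant C, hence the inf-sup estimate ‖ζ‖_{V₂} ≲ sup_{(ξ,φ)≠0} (a₂(ζ,ξ) + b₂(ζ,φ))/‖(ξ,φ)‖ holds uniformly in M and θ. -/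

import Mathlib

open scoped RealInnerProductSpace

/-- Verification of the Braess inf-sup condition for the mixed reaction-diffusion
sub-problem, uniformly in M ≥ 1 and θ ∈ (0, 1/M]. -/
theorem stmt_2 :
    ∃ C : ℝ, 0 < C ∧
      ∀ (V₂ Q : Type)
        [NormedAddCommGroup V₂] [InnerProductSpace ℝ V₂] [CompleteSpace V₂]
        [NormedAddCommGroup Q] [InnerProductSpace ℝ Q] [CompleteSpace Q]
        (M θ : ℝ), 1 ≤ M → 0 < θ → θ ≤ 1 / M →
        ∀ (a₂ : V₂ →ₗ[ℝ] V₂ →ₗ[ℝ] ℝ) (D : V₂ →ₗ[ℝ] Q),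
        -- a₂ symmetric, bounded and coercive (it induces the norm ‖·‖_𝕄)
        (∀ ζ ξ, a₂ ζ ξ = a₂ ξ ζ) →
        (∀ ζ, 0 ≤ a₂ ζ ζ) →
        (∃ Λ : ℝ, 0 < Λ ∧ ∀ ζ ξ, |a₂ ζ ξ| ≤ Λ * ‖ζ‖ * ‖ξ‖) →
        (∃ α : ℝ, 0 < α ∧ ∀ ζ, α * ‖ζ‖ ^ 2 ≤ a₂ ζ ζ) →
        ∀ ζ : V₂,
          -- with ξ = ζ and φ = M div ζ:
          (a₂ ζ ζ + ⟪D ζ, (M : ℝ) • D ζ⟫ = a₂ ζ ζ + M * ‖D ζ‖ ^ 2) ∧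
          -- ‖(ζ, M div ζ)‖² ≤ C ‖ζ‖²_{V₂}
          ((a₂ ζ ζ + M * ‖D ζ‖ ^ 2) +
              (1 / M) * ‖(M : ℝ) • D ζ‖ ^ 2 + θ * ‖(M : ℝ) • D ζ‖ ^ 2 ≤
            C * (a₂ ζ ζ + M * ‖D ζ‖ ^ 2)) ∧
          -- hence the uniform inf-sup estimate
          (Real.sqrt (a₂ ζ ζ + M * ‖D ζ‖ ^ 2) ≤
            C * ⨆ xp : {xp : V₂ × Q // xp ≠ 0},
              (a₂ ζ xp.1.1 + ⟪D ζ, xp.1.2⟫) /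
                Real.sqrt ((a₂ xp.1.1 xp.1.1 + M * ‖D xp.1.1‖ ^ 2) +
                  (1 / M) * ‖xp.1.2‖ ^ 2 + θ * ‖xp.1.2‖ ^ 2)) := by
  refine ⟨3, by norm_num, ?_⟩
  intro V₂ Q _ _ _ _ _ _ M θ hM hθ hθM a₂ D hsymm hpos hbdd hcoer ζ
  obtain ⟨Λ, hΛ, hbd⟩ := hbdd
  obtain ⟨α, hα, hco⟩ := hcoer
  have hM0 : (0:ℝ) < M := lt_of_lt_of_le one_pos hM
  have hθM : θ * M ≤ 1 := by
    rw [← le_div_iff₀ hM0]; exact hθM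
  have hζ2 : ⟪D ζ, (M : ℝ) • D ζ⟫ = M * ‖D ζ‖ ^ 2 := by
    rw [real_inner_smul_right, real_inner_self_eq_norm_sq]
  have hnormsmul : ‖(M : ℝ) • D ζ‖ ^ 2 = M ^ 2 * ‖D ζ‖ ^ 2 := by
    rw [norm_smul, Real.norm_eq_abs, abs_of_pos hM0]; ring
  set N := a₂ ζ ζ + M * ‖D ζ‖ ^ 2 with hNdef
  have hDζ2 : 0 ≤ ‖D ζ‖ ^ 2 := sq_nonneg _
  have hN0 : 0 ≤ N := add_nonneg (hpos ζ) (by positivity)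
  have key2 : N + (1 / M) * ‖(M : ℝ) • D ζ‖ ^ 2 + θ * ‖(M : ℝ) • D ζ‖ ^ 2 ≤ 3 * N := by
    rw [hnormsmul, hNdef]
    have h1 : (1 / M) * (M ^ 2 * ‖D ζ‖ ^ 2) = M * ‖D ζ‖ ^ 2 := by
      field_simp
    have h2 : θ * (M ^ 2 * ‖D ζ‖ ^ 2) ≤ M * ‖D ζ‖ ^ 2 := by
      nlinarith [hpos ζ, mul_nonneg hM0.le hDζ2]
    nlinarith [hpos ζ, mul_nonneg hM0.le hDζ2]
  refine ⟨by rw [hζ2], key2, ?_⟩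
  -- the supremand
  set f : {xp : V₂ × Q // xp ≠ 0} → ℝ := fun xp =>
    (a₂ ζ xp.1.1 + ⟪D ζ, xp.1.2⟫) /
      Real.sqrt ((a₂ xp.1.1 xp.1.1 + M * ‖D xp.1.1‖ ^ 2) +
        (1 / M) * ‖xp.1.2‖ ^ 2 + θ * ‖xp.1.2‖ ^ 2) with hfdef
  -- denominator is positive for nonzero xp
  have hSpos : ∀ xp : {xp : V₂ × Q // xp ≠ 0},
      0 < (a₂ xp.1.1 xp.1.1 + M * ‖D xp.1.1‖ ^ 2) +
        (1 / M) * ‖xp.1.2‖ ^ 2 + θ * ‖xp.1.2‖ ^ 2 := by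
    rintro ⟨⟨ξ, φ⟩, hne⟩
    dsimp only
    have h1 : 0 ≤ a₂ ξ ξ := hpos ξ
    have h2 : 0 ≤ M * ‖D ξ‖ ^ 2 := by positivity
    have h3 : 0 ≤ (1 / M) * ‖φ‖ ^ 2 := by positivity
    have h4 : 0 ≤ θ * ‖φ‖ ^ 2 := by positivity
    rcases eq_or_ne ξ 0 with hξ | hξ
    · have hφ : φ ≠ 0 := by
        intro hφ; exact hne (by simp [Prod.ext_iff, hξ, hφ])
      have : 0 < (1 / M) * ‖φ‖ ^ 2 := by
        have : 0 < ‖φ‖ := norm_pos_iff.mpr hφ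
        positivity
      linarith
    · have h5 : 0 < ‖ξ‖ := norm_pos_iff.mpr hξ
      have h6 : 0 < α * ‖ξ‖ ^ 2 := by positivity
      have h7 := hco ξ
      linarith
  -- the family is bounded above
  have hBdd : BddAbove (Set.range f) := by
    refine ⟨Λ * ‖ζ‖ / Real.sqrt α + Real.sqrt M * ‖D ζ‖, ?_⟩
    rintro y ⟨⟨⟨ξ, φ⟩, hne⟩, rfl⟩
    have hS := hSpos ⟨⟨ξ, φ⟩, hne⟩
    dsimp only at hS ⊢
    set S := (a₂ ξ ξ + M * ‖D ξ‖ ^ 2) + (1 / M) * ‖φ‖ ^ 2 + θ * ‖φ‖ ^ 2 with hSdef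
    have hsS : 0 < Real.sqrt S := Real.sqrt_pos.mpr hS
    rw [hfdef]
    dsimp only
    rw [div_le_iff₀ hsS]
    -- lower bounds on √S
    have hS1 : Real.sqrt α * ‖ξ‖ ≤ Real.sqrt S := by
      have h1 : α * ‖ξ‖ ^ 2 ≤ S := by
        have := hco ξ
        have h2 : 0 ≤ M * ‖D ξ‖ ^ 2 := by positivity
        have h3 : 0 ≤ (1 / M) * ‖φ‖ ^ 2 := by positivity
        have h4 : 0 ≤ θ * ‖φ‖ ^ 2 := by positivity
        rw [hSdef]; linarith
      calc Real.sqrt α * ‖ξ‖ = Real.sqrt (α * ‖ξ‖ ^ 2) := by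
            rw [Real.sqrt_mul hα.le, Real.sqrt_sq (norm_nonneg _)]
        _ ≤ Real.sqrt S := Real.sqrt_le_sqrt h1
    have hS2 : ‖φ‖ / Real.sqrt M ≤ Real.sqrt S := by
      have h1 : (1 / M) * ‖φ‖ ^ 2 ≤ S := by
        have h2 : 0 ≤ a₂ ξ ξ := hpos ξ
        have h3 : 0 ≤ M * ‖D ξ‖ ^ 2 := by positivity
        have h4 : 0 ≤ θ * ‖φ‖ ^ 2 := by positivity
        rw [hSdef]; linarith
      calc ‖φ‖ / Real.sqrt M = Real.sqrt ((1 / M) * ‖φ‖ ^ 2) := by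
            rw [Real.sqrt_mul (by positivity), Real.sqrt_sq (norm_nonneg _),
              one_div, Real.sqrt_inv, inv_mul_eq_div, div_eq_div_iff] <;> positivity
        _ ≤ Real.sqrt S := Real.sqrt_le_sqrt h1
    have hnum : a₂ ζ ξ + ⟪D ζ, φ⟫ ≤ Λ * ‖ζ‖ * ‖ξ‖ + ‖D ζ‖ * ‖φ‖ := by
      have h1 : a₂ ζ ξ ≤ Λ * ‖ζ‖ * ‖ξ‖ := (le_abs_self _).trans (hbd ζ ξ)
      have h2 : ⟪D ζ, φ⟫ ≤ ‖D ζ‖ * ‖φ‖ := real_inner_le_norm _ _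
      linarith
    have hsqM : 0 < Real.sqrt M := Real.sqrt_pos.mpr hM0
    have hsqα : 0 < Real.sqrt α := Real.sqrt_pos.mpr hα
    have e1 : Λ * ‖ζ‖ * ‖ξ‖ = (Λ * ‖ζ‖ / Real.sqrt α) * (Real.sqrt α * ‖ξ‖) := by
      field_simp
    have e2 : ‖D ζ‖ * ‖φ‖ = (Real.sqrt M * ‖D ζ‖) * (‖φ‖ / Real.sqrt M) := by
      field_simp
    have t1 : Λ * ‖ζ‖ * ‖ξ‖ ≤ (Λ * ‖ζ‖ / Real.sqrt α) * Real.sqrt S := by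
      rw [e1]
      exact mul_le_mul_of_nonneg_left hS1 (by positivity)
    have t2 : ‖D ζ‖ * ‖φ‖ ≤ (Real.sqrt M * ‖D ζ‖) * Real.sqrt S := by
      rw [e2]
      exact mul_le_mul_of_nonneg_left hS2 (by positivity)
    calc a₂ ζ ξ + ⟪D ζ, φ⟫ ≤ Λ * ‖ζ‖ * ‖ξ‖ + ‖D ζ‖ * ‖φ‖ := hnum
      _ ≤ (Λ * ‖ζ‖ / Real.sqrt α) * Real.sqrt S + (Real.sqrt M * ‖D ζ‖) * Real.sqrt S :=
          add_le_add t1 t2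
      _ = (Λ * ‖ζ‖ / Real.sqrt α + Real.sqrt M * ‖D ζ‖) * Real.sqrt S := by ring
  -- main case split
  rcases eq_or_ne ζ 0 with hζ | hζ
  · subst hζ
    have hN : N = 0 := by
      rw [hNdef]; simp
    rw [hN, Real.sqrt_zero]
    have hsup : 0 ≤ ⨆ xp : {xp : V₂ × Q // xp ≠ 0},
        (a₂ 0 xp.1.1 + ⟪D 0, xp.1.2⟫) /
          Real.sqrt ((a₂ xp.1.1 xp.1.1 + M * ‖D xp.1.1‖ ^ 2) +
            (1 / M) * ‖xp.1.2‖ ^ 2 + θ * ‖xp.1.2‖ ^ 2) := by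
      apply Real.iSup_nonneg
      intro xp
      simp
    linarith
  · -- ζ ≠ 0, so N > 0
    have hNpos : 0 < N := by
      have h1 : 0 < ‖ζ‖ := norm_pos_iff.mpr hζ
      have h2 := hco ζ
      have h3 : 0 ≤ M * ‖D ζ‖ ^ 2 := by positivity
      have h4 : 0 < α * ‖ζ‖ ^ 2 := by positivity
      rw [hNdef]; linarith
    set i₀ : {xp : V₂ × Q // xp ≠ 0} := ⟨(ζ, (M : ℝ) • D ζ), by
      intro h
      exact hζ (congrArg Prod.fst h)⟩ with hi₀
    have hfi₀ : f i₀ = N /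
        Real.sqrt (N + (1 / M) * ‖(M : ℝ) • D ζ‖ ^ 2 + θ * ‖(M : ℝ) • D ζ‖ ^ 2) := by
      rw [hfdef, hi₀]
      dsimp only
      rw [hζ2]
    set S₀ := N + (1 / M) * ‖(M : ℝ) • D ζ‖ ^ 2 + θ * ‖(M : ℝ) • D ζ‖ ^ 2 with hS₀
    have hS₀pos : 0 < S₀ := by
      have h1 : 0 ≤ (1 / M) * ‖(M : ℝ) • D ζ‖ ^ 2 := by positivity
      have h2 : 0 ≤ θ * ‖(M : ℝ) • D ζ‖ ^ 2 := by positivity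
      rw [hS₀]; linarith
    have hS₀le : S₀ ≤ 9 * N := by
      linarith [key2, hN0]
    have hsqS₀ : Real.sqrt S₀ ≤ 3 * Real.sqrt N := by
      calc Real.sqrt S₀ ≤ Real.sqrt (9 * N) := Real.sqrt_le_sqrt hS₀le
        _ = 3 * Real.sqrt N := by
            rw [show (9:ℝ) = 3 ^ 2 by norm_num, Real.sqrt_mul (by positivity),
              Real.sqrt_sq (by norm_num : (0:ℝ) ≤ 3)]
    have hsqS₀pos : 0 < Real.sqrt S₀ := Real.sqrt_pos.mpr hS₀pos
    have hkey : Real.sqrt N ≤ 3 * f i₀ := by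
      rw [hfi₀]
      rw [mul_div_assoc', le_div_iff₀ hsqS₀pos]
      have hNsq : Real.sqrt N * Real.sqrt N = N := Real.mul_self_sqrt hN0
      calc Real.sqrt N * Real.sqrt S₀ ≤ Real.sqrt N * (3 * Real.sqrt N) :=
            mul_le_mul_of_nonneg_left hsqS₀ (Real.sqrt_nonneg _)
        _ = 3 * (Real.sqrt N * Real.sqrt N) := by ring
        _ = 3 * N := by rw [hNsq]
    have hle : f i₀ ≤ ⨆ xp, f xp := le_ciSup hBdd i₀
    calc Real.sqrt N ≤ 3 * f i₀ := hkey
      _ ≤ 3 * ⨆ xp, f xp := by linarith
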